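/- Let C be a commutative ring and λ ∈ C, and let U_λC denote the λ-umbral algebra. The shift operator P : U_λC → U_λC defined by P(u_n) = u_{n+1} (i.e., (P u)(0) = 0 and (P u)(n+1) = u(n)) is a Baxter operator of weight λ on U_λC, that is, P(u)·P(v) = P(u·P(v)) + P(v·P(u)) + λ·P(u·v) for all u, v ∈ U_λC. -/

import Mathlib

open Finset

/-- The multiplication of the `λ`-umbral algebra `U_λC` on sequences `ℕ → C`:
`(u·v)(j) = ∑_{m=0}^{j} ∑_{n=j−m}^{j} binom(j,n)·binom(n,m+n−j)·λ^{m+n−j}·u(m)·v(n)`. -/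
def umul {C : Type*} [CommRing C] (lam : C) (u v : ℕ → C) : ℕ → C :=
  fun j => ∑ m ∈ Finset.range (j + 1), ∑ n ∈ Finset.Icc (j - m) j,
    (j.choose n : C) * (n.choose (m + n - j) : C) * lam ^ (m + n - j) * u m * v n

/-- The shift operator `P(u_n) = u_{n+1}`: `(P u)(0) = 0` and `(P u)(n+1) = u(n)`. -/
def shiftP {C : Type*} [CommRing C] (u : ℕ → C) : ℕ → C :=
  fun j => match j with
  | 0 => 0
  | n + 1 => u n

lemma shiftP_zero {C : Type*} [CommRing C] (u : ℕ → C) : shiftP u 0 = 0 := rfl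

lemma shiftP_succ {C : Type*} [CommRing C] (u : ℕ → C) (n : ℕ) : shiftP u (n + 1) = u n := rfl

lemma umul_eq {C : Type*} [CommRing C] (lam : C) (u v : ℕ → C) (j : ℕ) :
    umul lam u v j = ∑ m ∈ Finset.range (j + 1), ∑ n ∈ Finset.range (j + 1),
      (if j ≤ m + n then
        (j.choose n : C) * (n.choose (m + n - j) : C) * lam ^ (m + n - j) * u m * v n
      else 0) := by
  unfold umul
  refine Finset.sum_congr rfl fun m _ => ?_
  have h : Finset.Icc (j - m) j = (Finset.range (j + 1)).filter (fun n => j ≤ m + n) := by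
    ext n
    simp only [Finset.mem_Icc, Finset.mem_filter, Finset.mem_range, Nat.lt_succ_iff]
    omega
  rw [h, Finset.sum_filter]

lemma key_choose (k a b : ℕ) (hb : b ≤ k) (h : k ≤ a + b) :
    k.choose b * b.choose (a + b + 1 - k) =
      k.choose (a + 1) * (a + 1).choose (a + b + 1 - k) := by
  rcases le_or_gt (a + 1) k with hak | hak
  · have he1 : a + b + 1 - k ≤ b := by omega
    have he2 : a + b + 1 - k ≤ a + 1 := by omega
    rw [Nat.choose_mul (n := k) he1, Nat.choose_mul (n := k) he2]
    congr 1
    have h1 : b - (a + b + 1 - k) ≤ k - (a + b + 1 - k) := by omega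
    rw [← Nat.choose_symm h1]
    congr 1
    omega
  · rw [Nat.choose_eq_zero_of_lt hak,
      Nat.choose_eq_zero_of_lt (show b < a + b + 1 - k by omega)]
    simp

lemma pointwise {C : Type*} [CommRing C] (lam : C) (x y : C) (k a b : ℕ)
    (hb : b ≤ k) :
    (if k + 1 ≤ (a + 1) + (b + 1) then
        ((k + 1).choose (b + 1) : C) * ((b + 1).choose ((a + 1) + (b + 1) - (k + 1)) : C) *
          lam ^ ((a + 1) + (b + 1) - (k + 1)) * x * y
      else 0)
    = (if k ≤ a + (b + 1) then
        (k.choose (b + 1) : C) * ((b + 1).choose (a + (b + 1) - k) : C) *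
          lam ^ (a + (b + 1) - k) * x * y
      else 0)
    + (if k ≤ b + (a + 1) then
        (k.choose (a + 1) : C) * ((a + 1).choose (b + (a + 1) - k) : C) *
          lam ^ (b + (a + 1) - k) * y * x
      else 0)
    + lam * (if k ≤ a + b then
        (k.choose b : C) * (b.choose (a + b - k) : C) * lam ^ (a + b - k) * x * y
      else 0) := by
  rcases le_or_gt k (a + b) with h | h
  · rw [if_pos (by omega), if_pos (by omega), if_pos (by omega), if_pos h]
    have e1 : (a + 1) + (b + 1) - (k + 1) = (a + b - k) + 1 := by omega
    have e2 : a + (b + 1) - k = (a + b - k) + 1 := by omega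
    have e3 : b + (a + 1) - k = (a + b - k) + 1 := by omega
    rw [e1, e2, e3]
    have hp1 : (k + 1).choose (b + 1) = k.choose b + k.choose (b + 1) :=
      Nat.choose_succ_succ k b
    have hp2 : (b + 1).choose ((a + b - k) + 1) =
        b.choose (a + b - k) + b.choose ((a + b - k) + 1) :=
      Nat.choose_succ_succ b (a + b - k)
    have hkey : k.choose b * b.choose ((a + b - k) + 1) =
        k.choose (a + 1) * (a + 1).choose ((a + b - k) + 1) := by
      have := key_choose k a b hb h
      rwa [show a + b + 1 - k = (a + b - k) + 1 by omega] at this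
    have hkeyC : (k.choose b : C) * (b.choose ((a + b - k) + 1) : C) =
        (k.choose (a + 1) : C) * ((a + 1).choose ((a + b - k) + 1) : C) := by
      exact_mod_cast congrArg (Nat.cast : ℕ → C) hkey
    rw [hp1, hp2]
    push_cast
    linear_combination (lam ^ (a + b - k) * lam * x * y) * hkeyC
  · rcases le_or_gt k (a + b + 1) with h2 | h2
    · have hk : k = a + b + 1 := by omega
      subst hk
      rw [if_pos (by omega), if_pos (by omega), if_pos (by omega), if_neg (by omega)]
      have e1 : (a + 1) + (b + 1) - (a + b + 1 + 1) = 0 := by omega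
      have e2 : a + (b + 1) - (a + b + 1) = 0 := by omega
      have e3 : b + (a + 1) - (a + b + 1) = 0 := by omega
      rw [e1, e2, e3]
      simp only [Nat.choose_zero_right, Nat.cast_one, pow_zero, mul_one, one_mul]
      have hch : (a + b + 1 + 1).choose (b + 1) =
          (a + b + 1).choose (b + 1) + (a + b + 1).choose (a + 1) := by
        rw [Nat.choose_succ_succ (a + b + 1) b]
        simp only [Nat.succ_eq_add_one]
        have : (a + b + 1).choose b = (a + b + 1).choose (a + 1) := by
          rw [← Nat.choose_symm (show a + 1 ≤ a + b + 1 by omega)]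
          congr 1
          omega
        omega
      rw [hch]
      push_cast
      ring
    · rw [if_neg (by omega), if_neg (by omega), if_neg (by omega), if_neg (by omega)]
      ring

/-- The shift operator is a Baxter operator of weight `λ` on the `λ`-umbral algebra. -/
theorem shiftP_baxter {C : Type*} [CommRing C] (lam : C) (u v : ℕ → C) :
    umul lam (shiftP u) (shiftP v) =
      shiftP (umul lam u (shiftP v)) + shiftP (umul lam v (shiftP u)) +
        lam • shiftP (umul lam u v) := by
  funext j
  match j with
  | 0 =>
    simp [umul, shiftP]
  | k + 1 =>
    simp only [Pi.add_apply, Pi.smul_apply, smul_eq_mul, shiftP_succ]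
    have L : umul lam (shiftP u) (shiftP v) (k + 1)
        = ∑ a ∈ Finset.range (k + 1), ∑ b ∈ Finset.range (k + 1),
            (if k + 1 ≤ (a + 1) + (b + 1) then
              ((k + 1).choose (b + 1) : C) *
                ((b + 1).choose ((a + 1) + (b + 1) - (k + 1)) : C) *
                lam ^ ((a + 1) + (b + 1) - (k + 1)) * u a * v b
            else 0) := by
      rw [umul_eq, Finset.sum_range_succ']
      have h0 : (∑ n ∈ Finset.range (k + 1 + 1),
          (if k + 1 ≤ 0 + n then
            ((k + 1).choose n : C) * (n.choose (0 + n - (k + 1)) : C) *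
              lam ^ (0 + n - (k + 1)) * shiftP u 0 * shiftP v n
          else 0)) = 0 := by
        apply Finset.sum_eq_zero
        intro n _
        simp [shiftP_zero]
      rw [h0, add_zero]
      refine Finset.sum_congr rfl fun a _ => ?_
      rw [Finset.sum_range_succ']
      simp [shiftP_zero, shiftP_succ]
    have R1 : ∀ (w z : ℕ → C), umul lam w (shiftP z) k
        = ∑ a ∈ Finset.range (k + 1), ∑ b ∈ Finset.range (k + 1),
            (if k ≤ a + (b + 1) then
              (k.choose (b + 1) : C) * ((b + 1).choose (a + (b + 1) - k) : C) *
                lam ^ (a + (b + 1) - k) * w a * z b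
            else 0) := by
      intro w z
      rw [umul_eq]
      refine Finset.sum_congr rfl fun a _ => ?_
      rw [Finset.sum_range_succ' _ k]
      rw [Finset.sum_range_succ]
      simp [shiftP_zero, shiftP_succ, Nat.choose_succ_self]
    have R2 : umul lam v (shiftP u) k
        = ∑ a ∈ Finset.range (k + 1), ∑ b ∈ Finset.range (k + 1),
            (if k ≤ b + (a + 1) then
              (k.choose (a + 1) : C) * ((a + 1).choose (b + (a + 1) - k) : C) *
                lam ^ (b + (a + 1) - k) * v b * u a
            else 0) := by
      rw [R1 v u]
      exact Finset.sum_comm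
    rw [L, R1 u v, R2, umul_eq lam u v k]
    rw [Finset.mul_sum, ← Finset.sum_add_distrib, ← Finset.sum_add_distrib]
    refine Finset.sum_congr rfl fun a _ => ?_
    rw [Finset.mul_sum, ← Finset.sum_add_distrib, ← Finset.sum_add_distrib]
    refine Finset.sum_congr rfl fun b hb => ?_
    exact pointwise lam (u a) (v b) k a b (by simpa [Nat.lt_succ_iff] using hb)
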